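/- Let Y = Y(X) ∈ X·ℤ_p[[X]] be the unique power series with zero constant term satisfying E(Y) = E(X)^p. Then Y ∈ X^p ℤ_p[[X]] + p X ℤ_p[[X]]; equivalently, every coefficient of X^j in Y with 1 ≤ j < p is divisible by p. -/

import Mathlib

open PowerSeries
open scoped Classical

noncomputable section

/-- The power series `Σ_{i≥0} X^(p^i − 1)`, the logarithmic derivative of the
Artin–Hasse exponential. -/
def ahLogDeriv (p : ℕ) (R : Type*) [CommRing R] : PowerSeries R :=
  PowerSeries.mk fun n => if ∃ i : ℕ, n + 1 = p ^ i then 1 else 0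

/-- `E` is the Artin–Hasse exponential `exp(Σ_{i≥0} X^(p^i)/p^i)`: over a characteristic-zero
ring with no additive torsion this is equivalent to `E(0) = 1` together with the logarithmic
differential equation `E' = E · Σ_{i≥0} X^(p^i−1)`. -/
def IsArtinHasse (p : ℕ) {R : Type*} [CommRing R] (E : PowerSeries R) : Prop :=
  PowerSeries.constantCoeff (R := R) E = 1 ∧
    (PowerSeries.derivative R) E = E * ahLogDeriv p R

/-- Composition `f(g)` of formal power series (intended for `g` with zero constant term,
in which case this is the usual substitution). -/
def psComp {R : Type*} [CommRing R] (f g : PowerSeries R) : PowerSeries R :=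
  PowerSeries.mk fun n => ∑ k ∈ Finset.range (n + 1),
    PowerSeries.coeff (R := R) k f * PowerSeries.coeff (R := R) n (g ^ k)

/-- `w = π_i`: the unique power series with zero constant term satisfying
`E(π_i) = (1+T)^(p^i)`. -/
def IsPiAH (p : ℕ) {R : Type*} [CommRing R] (E : PowerSeries R) (i : ℕ)
    (w : PowerSeries R) : Prop :=
  PowerSeries.constantCoeff (R := R) w = 0 ∧ psComp E w = (1 + PowerSeries.X) ^ p ^ i

/-- `bin z n` is the binomial coefficient `C(z, n)`, characterized by
`n! · bin z n = z(z−1)⋯(z−n+1)`. -/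
def IsBinomial {R : Type*} [CommRing R] (bin : R → ℕ → R) : Prop :=
  ∀ z n, (n.factorial : R) * bin z n = ∏ i ∈ Finset.range n, (z - (i : R))

/-- The binomial series `(1+T)^z = Σ_n C(z,n) Tⁿ`. -/
def onePlusTPow {R : Type*} [CommRing R] (bin : R → ℕ → R) (z : R) : PowerSeries R :=
  PowerSeries.mk fun n => bin z n

/-- `F^z = Σ_n C(z,n) (F−1)ⁿ` for a power series `F` with constant term `1`. -/
def psPow {R : Type*} [CommRing R] (bin : R → ℕ → R) (z : R) (F : PowerSeries R) :
    PowerSeries R :=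
  PowerSeries.mk fun n => ∑ k ∈ Finset.range (n + 1),
    bin z k * PowerSeries.coeff (R := R) n ((F - 1) ^ k)

/-- The canonical ring map `ℤ_p = W(𝔽_p) → W(F)` for a ring `F` of characteristic `p`. -/
def toWitt (p : ℕ) [Fact p.Prime] (F : Type*) [CommRing F] [CharP F p] :
    ℤ_[p] →+* WittVector p F :=
  (WittVector.map (ZMod.castHom dvd_rfl F)).comp (WittVector.equiv p).symm.toRingHom

/-- `E(cst · η · x^u)` as a power series in `x` whose coefficients are power series
(in the variable of `η`). -/
def EmonoSub {R : Type*} [CommRing R] (E : PowerSeries R) (eta : PowerSeries R) (cst : R)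
    (u : ℕ) : PowerSeries (PowerSeries R) :=
  if u = 0 then PowerSeries.C (R := _) (psComp E (PowerSeries.C (R := R) cst * eta))
  else PowerSeries.mk fun v =>
    if u ∣ v then PowerSeries.C (R := R) (PowerSeries.coeff (R := R) (v / u) E * cst ^ (v / u)) * eta ^ (v / u)
    else 0

/-- `E_h(x, η) = ∏_{u=0}^{d'} E(η ĥ_u x^u)` for `h` with (lifted) coefficients `co u`. -/
def Eh {R : Type*} [CommRing R] (E : PowerSeries R) (eta : PowerSeries R) (co : ℕ → R)
    (d' : ℕ) : PowerSeries (PowerSeries R) :=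
  ∏ u ∈ Finset.range (d' + 1), EmonoSub E eta (co u) u

/-- The partial product `∏_{i<n} E_{f_i}(x, π_i)`. -/
def EfPartial {R : Type*} [CommRing R] (E : PowerSeries R) (Pi : ℕ → PowerSeries R)
    (co : ℕ → ℕ → R) (d : ℕ → ℕ) (n : ℕ) : PowerSeries (PowerSeries R) :=
  ∏ i ∈ Finset.range n, Eh E (Pi i) (co i) (d i)

/-- `Ef = E_f(x) = ∏_{i=0}^∞ E_{f_i}(x, π_i)`, as the `(p,T)`-adic limit of the partial
products: the `x^u`-coefficient of `E_f − ∏_{i<n} E_{f_i}` lies in `(p, T)^(n+1)`. -/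
def IsEfProd (p : ℕ) {R : Type*} [CommRing R] (E : PowerSeries R) (Pi : ℕ → PowerSeries R)
    (co : ℕ → ℕ → R) (d : ℕ → ℕ) (Ef : PowerSeries (PowerSeries R)) : Prop :=
  ∀ n u : ℕ,
    PowerSeries.coeff (R := _) u Ef - PowerSeries.coeff (R := _) u (EfPartial E Pi co d n)
      ∈ (Ideal.span {(p : PowerSeries R), PowerSeries.X}) ^ (n + 1)

/-- `ord_R(g) ≥ r`:  for `mt = 1` the `T`-adic order of `g` is at least `r`; for `mt ≥ 2`,
writing `g = Σ_j c_j T^j`, `min_j (ord_p(c_j)·p^(mt−2)(p−1) + j) ≥ r`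
(the `(p^θ, T)`-adic order with `θ = 1/(p^(mt−2)(p−1))`, normalized by `ord_R(T) = 1`). -/
def ordRge (p : ℕ) {R : Type*} [CommRing R] (mt : ℕ) (g : PowerSeries R) (r : ℚ) : Prop :=
  ∀ j n : ℕ, ¬ ((p : R) ^ (n + 1) ∣ PowerSeries.coeff (R := R) j g) →
    (if mt = 1 then r ≤ (j : ℚ)
     else r ≤ (n : ℚ) * ((p : ℚ) ^ (mt - 2) * ((p : ℚ) - 1)) + (j : ℚ))


/-- If `Y` has zero constant term and `E(Y) = E(X)^p`, then
`Y ∈ X^p·ℤ_p[[X]] + p·X·ℤ_p[[X]]`; equivalently every coefficient of `X^j` in `Y`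
with `1 ≤ j < p` is divisible by `p`. -/
theorem artinHasse_pow_p_subst (p : ℕ) [Fact p.Prime]
    (E : PowerSeries ℤ_[p]) (hE : IsArtinHasse p E)
    (Y : PowerSeries ℤ_[p]) (hY0 : PowerSeries.constantCoeff (R := ℤ_[p]) Y = 0)
    (hY : psComp E Y = E ^ p) :
    (∃ u v : PowerSeries ℤ_[p],
        Y = PowerSeries.X ^ p * u + (p : PowerSeries ℤ_[p]) * (PowerSeries.X * v)) ∧
      ∀ j : ℕ, 1 ≤ j → j < p → (p : ℤ_[p]) ∣ PowerSeries.coeff (R := ℤ_[p]) j Y := by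
  have hp : p.Prime := Fact.out
  -- coeff 1 E = 1
  have hE1 : PowerSeries.coeff (R := ℤ_[p]) 1 E = 1 := by
    have h := congrArg (PowerSeries.coeff (R := ℤ_[p]) 0) hE.2
    rw [PowerSeries.coeff_derivative] at h
    have hR : PowerSeries.coeff (R := ℤ_[p]) 0 (E * ahLogDeriv p ℤ_[p]) = 1 := by
      rw [PowerSeries.coeff_zero_eq_constantCoeff, map_mul, hE.1, one_mul]
      show PowerSeries.constantCoeff (R := ℤ_[p]) (PowerSeries.mk _) = 1
      rw [← PowerSeries.coeff_zero_eq_constantCoeff, PowerSeries.coeff_mk,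
        if_pos ⟨0, (pow_zero p).symm⟩]
    rw [hR] at h
    simpa using h
  -- X divides E - 1
  have hG0 : PowerSeries.constantCoeff (R := ℤ_[p]) (E - 1) = 0 := by
    rw [map_sub, hE.1, map_one, sub_self]
  have hXG : (PowerSeries.X : PowerSeries ℤ_[p]) ∣ (E - 1) :=
    PowerSeries.X_dvd_iff.2 hG0
  -- p divides low coefficients of E ^ p
  have hEp : ∀ j : ℕ, 1 ≤ j → j < p →
      (p : ℤ_[p]) ∣ PowerSeries.coeff (R := ℤ_[p]) j (E ^ p) := by
    intro j hj1 hjp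
    have hEeq : E ^ p = ∑ k ∈ Finset.range (p + 1),
        (E - 1) ^ k * 1 ^ (p - k) * ((p.choose k : ℕ) : PowerSeries ℤ_[p]) := by
      conv_lhs => rw [show E = (E - 1) + 1 by ring]
      rw [add_pow]
    rw [hEeq, map_sum]
    refine Finset.dvd_sum fun k _ => ?_
    rw [one_pow, mul_one, ← map_natCast (PowerSeries.C (R := ℤ_[p])) (p.choose k),
      PowerSeries.coeff_mul_C]
    rcases lt_or_ge j k with h | h
    · have hz : PowerSeries.coeff (R := ℤ_[p]) j ((E - 1) ^ k) = 0 :=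
        PowerSeries.X_pow_dvd_iff.1 (pow_dvd_pow_of_dvd hXG k) j h
      rw [hz, zero_mul]
      exact dvd_zero _
    · rcases Nat.eq_zero_or_pos k with rfl | hk0
      · have : PowerSeries.coeff (R := ℤ_[p]) j ((E - 1) ^ 0) = 0 := by
          rw [pow_zero, PowerSeries.coeff_one, if_neg (by omega)]
        rw [this, zero_mul]
        exact dvd_zero _
      · refine dvd_mul_of_dvd_right ?_ _
        exact_mod_cast Nat.cast_dvd_cast (α := ℤ_[p])
          (hp.dvd_choose_self (by omega) (by omega))
  -- the main divisibility, by strong induction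
  have hdvd : ∀ j : ℕ, j < p → (p : ℤ_[p]) ∣ PowerSeries.coeff (R := ℤ_[p]) j Y := by
    intro j
    induction j using Nat.strong_induction_on with
    | _ j IH =>
      intro hjp
      rcases Nat.eq_zero_or_pos j with rfl | hj1
      · rw [PowerSeries.coeff_zero_eq_constantCoeff, hY0]
        exact dvd_zero _
      -- p divides coeff j (Y ^ k) for k ≥ 2
      have hYk : ∀ k : ℕ, 2 ≤ k →
          (p : ℤ_[p]) ∣ PowerSeries.coeff (R := ℤ_[p]) j (Y ^ k) := by
        intro k hk
        obtain ⟨k, rfl⟩ : ∃ k', k = k' + 1 := ⟨k - 1, by omega⟩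
        rw [pow_succ', PowerSeries.coeff_mul]
        refine Finset.dvd_sum fun mn hmn => ?_
        rw [Finset.HasAntidiagonal.mem_antidiagonal] at hmn
        by_cases hm : mn.1 = j
        · have h2 : mn.2 = 0 := by omega
          have : PowerSeries.coeff (R := ℤ_[p]) mn.2 (Y ^ k) = 0 := by
            rw [h2, PowerSeries.coeff_zero_eq_constantCoeff, map_pow, hY0,
              zero_pow (by omega)]
          rw [this, mul_zero]
          exact dvd_zero _
        · exact dvd_mul_of_dvd_left (IH mn.1 (by omega) (by omega)) _
      have key := congrArg (PowerSeries.coeff (R := ℤ_[p]) j) hY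
      rw [psComp, PowerSeries.coeff_mk] at key
      rw [← Finset.sum_erase_add (Finset.range (j + 1))
        (fun k => PowerSeries.coeff (R := ℤ_[p]) k E * PowerSeries.coeff (R := ℤ_[p]) j (Y ^ k))
        (show 1 ∈ Finset.range (j + 1) by simp; omega)] at key
      simp only [pow_one, hE1, one_mul] at key
      have hYj : PowerSeries.coeff (R := ℤ_[p]) j Y = PowerSeries.coeff (R := ℤ_[p]) j (E ^ p) -
          ∑ k ∈ (Finset.range (j + 1)).erase 1,
            PowerSeries.coeff (R := ℤ_[p]) k E * PowerSeries.coeff (R := ℤ_[p]) j (Y ^ k) := by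
        rw [← key]; ring
      rw [hYj]
      refine dvd_sub (hEp j hj1 hjp) (Finset.dvd_sum fun k hk => ?_)
      rw [Finset.mem_erase, Finset.mem_range] at hk
      rcases Nat.eq_zero_or_pos k with rfl | hk0
      · have : PowerSeries.coeff (R := ℤ_[p]) j (Y ^ 0) = 0 := by
          rw [pow_zero, PowerSeries.coeff_one, if_neg (by omega)]
        rw [this, mul_zero]
        exact dvd_zero _
      · exact dvd_mul_of_dvd_right (hYk k (by omega)) _
  refine ⟨?_, fun j _ hjp => hdvd j hjp⟩
  -- the decomposition
  refine ⟨PowerSeries.mk fun n => PowerSeries.coeff (R := ℤ_[p]) (n + p) Y,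
    PowerSeries.mk fun n => if h : n + 1 < p then (hdvd (n + 1) h).choose else 0, ?_⟩
  have hpC : (p : PowerSeries ℤ_[p]) = PowerSeries.C (R := ℤ_[p]) (p : ℤ_[p]) :=
    (map_natCast _ p).symm
  ext n
  rw [map_add, hpC, PowerSeries.coeff_C_mul]
  rcases lt_or_ge n p with h | h
  · have h1 : PowerSeries.coeff (R := ℤ_[p]) n
        (PowerSeries.X ^ p * PowerSeries.mk fun n => PowerSeries.coeff (R := ℤ_[p]) (n + p) Y)
          = 0 :=
      PowerSeries.X_pow_dvd_iff.1 (Dvd.intro _ rfl) n h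
    rw [h1, zero_add]
    rcases n with _ | m
    · have : PowerSeries.coeff (R := ℤ_[p]) 0
          (PowerSeries.X * PowerSeries.mk fun n =>
            if h : n + 1 < p then (hdvd (n + 1) h).choose else 0) = 0 := by
        rw [PowerSeries.coeff_zero_eq_constantCoeff, map_mul,
          PowerSeries.constantCoeff_X, zero_mul]
      rw [this, mul_zero, PowerSeries.coeff_zero_eq_constantCoeff, hY0]
    · rw [PowerSeries.coeff_succ_X_mul, PowerSeries.coeff_mk, dif_pos h]
      exact (hdvd (m + 1) h).choose_spec
  · obtain ⟨m, rfl⟩ : ∃ m, n = m + p := ⟨n - p, by omega⟩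
    rw [PowerSeries.coeff_X_pow_mul, PowerSeries.coeff_mk]
    have hp1 : 1 ≤ p := hp.pos
    have hmp : m + p = (m + p - 1) + 1 := by omega
    rw [hmp, PowerSeries.coeff_succ_X_mul, PowerSeries.coeff_mk,
      dif_neg (by omega), mul_zero, add_zero]

end
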